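/- Appendix C, Lemma 3: let F be a qubit effect with Bloch vector x⃗ = (x₁, x₂, 0) (vanishing third component) and x₀ = Re tr F ≥ c for some c > 0, and let ρ be a qubit state with Bloch vector r⃗ = (r₁, r₂, r₃). If Re tr(ρF) ≤ ε with 0 ≤ 2ε ≤ c, then √(r₁² + r₂²) ≥ 1 − 2ε/c and |r₃| ≤ √(1 − (1 − 2ε/c)²). -/

import Mathlib

open Matrix
open scoped ComplexOrder

/-- A qubit state: a positive semidefinite 2×2 complex matrix with trace 1. -/
def QubitState (ρ : Matrix (Fin 2) (Fin 2) ℂ) : Prop :=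
  ρ.PosSemidef ∧ ρ.trace = 1

/-- A qubit effect: a 2×2 complex matrix `E` with both `E` and `1 - E` positive semidefinite. -/
def QubitEffect (E : Matrix (Fin 2) (Fin 2) ℂ) : Prop :=
  E.PosSemidef ∧ (1 - E).PosSemidef

/-- A realization of a 3×3 correlation matrix `P` by three qubit states, a three-outcome
qubit POVM `(M11, M21, M31)` and a two-outcome qubit POVM `(M12, M22)`. -/
def IsRealization (P : Matrix (Fin 3) (Fin 3) ℝ)
    (ρ : Fin 3 → Matrix (Fin 2) (Fin 2) ℂ)
    (M11 M21 M31 M12 M22 : Matrix (Fin 2) (Fin 2) ℂ) : Prop :=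
  (∀ x, QubitState (ρ x)) ∧
  QubitEffect M11 ∧ QubitEffect M21 ∧ QubitEffect M31 ∧
  M11 + M21 + M31 = 1 ∧
  QubitEffect M12 ∧ QubitEffect M22 ∧
  M12 + M22 = 1 ∧
  (∀ x, P x 0 = ((ρ x * M11).trace).re ∧
        P x 1 = ((ρ x * M21).trace).re ∧
        P x 2 = ((ρ x * M12).trace).re)

/-- The USD pattern of zeros and ones of the correlation matrix, Eq. (3). -/
def USDpattern (P : Matrix (Fin 3) (Fin 3) ℝ) : Prop :=
  P 0 2 = 0 ∧ P 1 1 = 0 ∧ P 1 2 = 1 ∧ P 2 0 = 0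

/-- The set USD₂ of qubit USD correlations. -/
def USD2 (P : Matrix (Fin 3) (Fin 3) ℝ) : Prop :=
  USDpattern P ∧
  ∃ ρ M11 M21 M31 M12 M22, IsRealization P ρ M11 M21 M31 M12 M22

/-- A three-outcome qubit POVM is simulable by dichotomic measurements, Eq. (1). -/
def Simulable (M11 M21 M31 : Matrix (Fin 2) (Fin 2) ℂ) : Prop :=
  ∃ p1 p2 p3 : ℝ, ∃ N11 N22 N13 : Matrix (Fin 2) (Fin 2) ℂ,
    0 ≤ p1 ∧ 0 ≤ p2 ∧ 0 ≤ p3 ∧ p1 + p2 + p3 = 1 ∧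
    QubitEffect N11 ∧ QubitEffect N22 ∧ QubitEffect N13 ∧
    M11 = p1 • N11 + p3 • N13 ∧
    M21 = p1 • (1 - N11) + p2 • N22 ∧
    M31 = p2 • (1 - N22) + p3 • (1 - N13)

/-- The set SIM₂ of simulable trichotomic qubit correlations in the minimal scenario. -/
def SIM2 (P : Matrix (Fin 3) (Fin 3) ℝ) : Prop :=
  ∃ ρ M11 M21 M31 M12 M22, IsRealization P ρ M11 M21 M31 M12 M22 ∧
    Simulable M11 M21 M31

/-- The parameterized USD correlation matrix 𝒫(p, q, ξ) of Eq. (4). -/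
noncomputable def Pmat (p q ξ : ℝ) : Matrix (Fin 3) (Fin 3) ℝ :=
  !![p * ξ,       q,           0;
     p * (1 - ξ), 0,           1;
     0,           q * (1 - ξ), ξ]

/-- The three Pauli matrices. -/
noncomputable def pauli : Fin 3 → Matrix (Fin 2) (Fin 2) ℂ :=
  ![!![0, 1; 1, 0], !![0, -Complex.I; Complex.I, 0], !![1, 0; 0, -1]]

/-- The Bloch vector of a 2×2 complex matrix: `(Re tr(A σ₁), Re tr(A σ₂), Re tr(A σ₃))`. -/
noncomputable def bloch (A : Matrix (Fin 2) (Fin 2) ℂ) : Fin 3 → ℝ :=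
  fun i => ((A * pauli i).trace).re

section Aux

open scoped ComplexOrder

private lemma aux_nonneg_re {z : ℂ} (h : 0 ≤ z) : 0 ≤ z.re := by
  rw [Complex.le_def] at h; simpa using h.1

private lemma aux_diag_nonneg {A : Matrix (Fin 2) (Fin 2) ℂ} (hA : A.PosSemidef)
    (i : Fin 2) : 0 ≤ (A i i).re := by
  have q := hA.dotProduct_mulVec_nonneg (Pi.single i 1)
  have q' : 0 ≤ A i i := by
    simpa [dotProduct, Matrix.mulVec, Fin.sum_univ_two, Pi.single_apply] using q
  exact aux_nonneg_re q'

private lemma aux_det_fact {A : Matrix (Fin 2) (Fin 2) ℂ} (hA : A.PosSemidef)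
    (h10 : A 1 0 = star (A 0 1))
    (haim : (A 0 0).im = 0) (hdim : (A 1 1).im = 0) :
    0 ≤ (A 0 0).re * ((A 0 0).re * (A 1 1).re - ((A 0 1).re ^ 2 + (A 0 1).im ^ 2)) ∧
    0 ≤ (A 1 1).re * ((A 0 0).re * (A 1 1).re - ((A 0 1).re ^ 2 + (A 0 1).im ^ 2)) := by
  constructor
  · have qa := hA.dotProduct_mulVec_nonneg ![-(A 0 1), A 0 0]
    rw [Complex.le_def] at qa
    obtain ⟨qa1, -⟩ := qa
    simp [dotProduct, Matrix.mulVec, Fin.sum_univ_two, h10, Complex.mul_re,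
      Complex.mul_im, Complex.add_re, Complex.add_im, haim, hdim] at qa1
    nlinarith [qa1]
  · have qa := hA.dotProduct_mulVec_nonneg ![A 1 1, -(A 1 0)]
    rw [Complex.le_def] at qa
    obtain ⟨qa1, -⟩ := qa
    simp [dotProduct, Matrix.mulVec, Fin.sum_univ_two, h10, Complex.mul_re,
      Complex.mul_im, Complex.add_re, Complex.add_im, haim, hdim] at qa1
    nlinarith [qa1]

set_option maxHeartbeats 1000000 in
private lemma aux_real_key (ar dr br bi er fr fi gr c ε : ℝ)
    (ha : 0 ≤ ar) (hd : 0 ≤ dr) (had : ar + dr = 1)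
    (hDρ : br ^ 2 + bi ^ 2 ≤ ar * dr)
    (heg : er = gr)
    (hDF : fr ^ 2 + fi ^ 2 ≤ er * gr)
    (hx0 : c ≤ er + gr) (hc : 0 < c) (hε : 0 ≤ ε) (h2e : 2 * ε ≤ c)
    (hpr : ar * er + dr * gr + 2 * (br * fr + bi * fi) ≤ ε) :
    1 - 2 * ε / c ≤ 2 * Real.sqrt (br ^ 2 + bi ^ 2) ∧
    (ar - dr) ^ 2 ≤ 1 - (1 - 2 * ε / c) ^ 2 := by
  set m := Real.sqrt (br ^ 2 + bi ^ 2) with hm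
  have hm0 : 0 ≤ m := Real.sqrt_nonneg _
  have hm2 : m ^ 2 = br ^ 2 + bi ^ 2 := Real.sq_sqrt (by positivity)
  have he : c / 2 ≤ er := by rw [heg] at hx0 ⊢; linarith
  have he0 : 0 ≤ er := by linarith
  have hcs : (br * fr + bi * fi) ^ 2 ≤ (m * er) ^ 2 := by
    have h1 : (br * fr + bi * fi) ^ 2 ≤ (br ^ 2 + bi ^ 2) * (fr ^ 2 + fi ^ 2) := by
      nlinarith [sq_nonneg (br * fi - bi * fr)]
    have h2 : (fr ^ 2 + fi ^ 2) ≤ er ^ 2 := by nlinarith [heg]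
    nlinarith [hm2, sq_nonneg br, sq_nonneg bi]
  have hlow : -(m * er) ≤ br * fr + bi * fi := by
    nlinarith [sq_nonneg (br * fr + bi * fi + m * er), mul_nonneg hm0 he0]
  have hkey : 1 - 2 * ε / c ≤ 2 * m := by
    rcases le_or_gt 1 (2 * m) with h | h
    · have : 0 ≤ 2 * ε / c := by positivity
      linarith
    · have hce : c * (1 - 2 * m) ≤ 2 * ε := by nlinarith
      rw [show 1 - 2 * ε / c = (c - 2 * ε) / c by field_simp, div_le_iff₀ hc]
      nlinarith
  have ht0 : 0 ≤ 1 - 2 * ε / c := by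
    have : 2 * ε / c ≤ 1 := by rw [div_le_one hc]; linarith
    linarith
  refine ⟨hkey, ?_⟩
  nlinarith [mul_self_le_mul_self ht0 hkey, hm2, hDρ, had]

end Aux


/-- Appendix C, Lemma 3: for a qubit effect `F` whose Bloch vector has vanishing third
component and `Re tr F ≥ c > 0`, and a qubit state `ρ` with `Re tr(ρF) ≤ ε`, `0 ≤ 2ε ≤ c`,
the Bloch vector `r` of `ρ` satisfies `√(r₁² + r₂²) ≥ 1 - 2ε/c` and
`|r₃| ≤ √(1 - (1 - 2ε/c)²)`. -/
theorem bloch_purity_bound (F ρ : Matrix (Fin 2) (Fin 2) ℂ)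
    (hF : QubitEffect F) (hρ : QubitState ρ) (c ε : ℝ) (hc : 0 < c)
    (hx3 : bloch F 2 = 0) (hx0 : (F.trace).re ≥ c)
    (hε : 0 ≤ ε) (h2ε : 2 * ε ≤ c)
    (hprob : ((ρ * F).trace).re ≤ ε) :
    Real.sqrt ((bloch ρ 0) ^ 2 + (bloch ρ 1) ^ 2) ≥ 1 - 2 * ε / c ∧
    |bloch ρ 2| ≤ Real.sqrt (1 - (1 - 2 * ε / c) ^ 2) := by
  obtain ⟨hρP, hρtr⟩ := hρ
  obtain ⟨hFP, -⟩ := hF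
  have hρ10 : ρ 1 0 = star (ρ 0 1) := by
    have h := hρP.1.apply 0 1; rw [← h, star_star]
  have hF10 : F 1 0 = star (F 0 1) := by
    have h := hFP.1.apply 0 1; rw [← h, star_star]
  have haim : (ρ 0 0).im = 0 := Complex.conj_eq_iff_im.mp (hρP.1.apply 0 0)
  have hdim : (ρ 1 1).im = 0 := Complex.conj_eq_iff_im.mp (hρP.1.apply 1 1)
  have heim : (F 0 0).im = 0 := Complex.conj_eq_iff_im.mp (hFP.1.apply 0 0)
  have hgim : (F 1 1).im = 0 := Complex.conj_eq_iff_im.mp (hFP.1.apply 1 1)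
  have ha : 0 ≤ (ρ 0 0).re := aux_diag_nonneg hρP 0
  have hd : 0 ≤ (ρ 1 1).re := aux_diag_nonneg hρP 1
  have had : (ρ 0 0).re + (ρ 1 1).re = 1 := by
    have h := congrArg Complex.re hρtr
    rw [Matrix.trace_fin_two] at h
    simpa using h
  have hdetρ' := aux_det_fact hρP hρ10 haim hdim
  have hDρ : (ρ 0 1).re ^ 2 + (ρ 0 1).im ^ 2 ≤ (ρ 0 0).re * (ρ 1 1).re := by
    nlinarith [hdetρ'.1, hdetρ'.2, had]
  have hxtr : c ≤ (F 0 0).re + (F 1 1).re := by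
    rw [Matrix.trace_fin_two] at hx0
    simpa using hx0
  have heg : (F 0 0).re = (F 1 1).re := by
    simp [bloch, pauli, Matrix.trace_fin_two, Matrix.mul_apply, Fin.sum_univ_two] at hx3
    linarith
  have hdetF' := aux_det_fact hFP hF10 heim hgim
  have hDF : (F 0 1).re ^ 2 + (F 0 1).im ^ 2 ≤ (F 0 0).re * (F 1 1).re := by
    nlinarith [hdetF'.1, hdetF'.2, hxtr, hc]
  have hpr : (ρ 0 0).re * (F 0 0).re + (ρ 1 1).re * (F 1 1).re
      + 2 * ((ρ 0 1).re * (F 0 1).re + (ρ 0 1).im * (F 0 1).im) ≤ ε := by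
    have h : ((ρ * F).trace).re = (ρ 0 0).re * (F 0 0).re - (ρ 0 0).im * (F 0 0).im
        + ((ρ 1 1).re * (F 1 1).re - (ρ 1 1).im * (F 1 1).im)
        + 2 * ((ρ 0 1).re * (F 0 1).re + (ρ 0 1).im * (F 0 1).im) := by
      simp [Matrix.trace_fin_two, Matrix.mul_apply, Fin.sum_univ_two, hρ10, hF10]
      ring
    rw [h, haim, hdim] at hprob
    linarith
  obtain ⟨k1, k2⟩ := aux_real_key (ρ 0 0).re (ρ 1 1).re (ρ 0 1).re (ρ 0 1).im
    (F 0 0).re (F 0 1).re (F 0 1).im (F 1 1).re c ε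
    ha hd had hDρ heg hDF hxtr hc hε h2ε hpr
  have hb0 : bloch ρ 0 = 2 * (ρ 0 1).re := by
    simp [bloch, pauli, Matrix.trace_fin_two, Matrix.mul_apply, Fin.sum_univ_two, hρ10]
    ring
  have hb1 : bloch ρ 1 = -2 * (ρ 0 1).im := by
    simp [bloch, pauli, Matrix.trace_fin_two, Matrix.mul_apply, Fin.sum_univ_two, hρ10]
    ring
  have hb2 : bloch ρ 2 = (ρ 0 0).re - (ρ 1 1).re := by
    simp [bloch, pauli, Matrix.trace_fin_two, Matrix.mul_apply, Fin.sum_univ_two]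
    ring
  constructor
  · rw [hb0, hb1]
    have hsq : (2 * (ρ 0 1).re) ^ 2 + (-2 * (ρ 0 1).im) ^ 2
        = 4 * ((ρ 0 1).re ^ 2 + (ρ 0 1).im ^ 2) := by ring
    rw [hsq, show (4 : ℝ) * ((ρ 0 1).re ^ 2 + (ρ 0 1).im ^ 2)
        = 2 ^ 2 * ((ρ 0 1).re ^ 2 + (ρ 0 1).im ^ 2) by norm_num,
      Real.sqrt_mul (by positivity), Real.sqrt_sq (by norm_num : (0:ℝ) ≤ 2)]
    exact k1
  · rw [hb2]
    exact Real.abs_le_sqrt k2
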